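/- (Theorem 3.1, analytic form.) Let Ω ⊆ ℝ^p be open, e ∈ Ω, and let φ : Ω × Ω → Ω, (θ,a) ↦ φ(θ,a), be a C² map with φ(θ,e) = θ for all θ ∈ Ω (in the application, φ(θ,a) = aθ is the group action of the transformation group on the parameter space). Define the p×p matrix Φ̃(θ) with entries Φ̃^r_s(θ) = ∂φ_r(θ,a)/∂a_s evaluated at a = e, assume Φ̃(θ) is invertible for every θ, and let π^H(θ) = |det Φ̃(θ)|^{−1} (the right Haar prior density). Suppose u : Ω × (0,1) → ℝ^p is C¹ in θ and equivariant in the sense that u^i(φ(θ,a),α) = u^s(θ,α) · ∂φ_i(θ,a)/∂θ_s (summation over s) for all θ, a ∈ Ω and all α ∈ (0,1). Then ∂_s{u^s(θ,α)π^H(θ)} = 0 (summation over s) for every θ ∈ Ω and every α ∈ (0,1); that is, the right Haar prior solves the uniformly predictive matching equation ∂_s{g^{st}μ_tπ} = 0 whenever the vector field u^s = g^{st}μ_t has this equivariance property. -/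

import Mathlib

open MeasureTheory Set

private lemma det_deriv_aux {p : ℕ} (A H : Matrix (Fin p) (Fin p) ℝ) :
    ∑ σ : Equiv.Perm (Fin p), ((Equiv.Perm.sign σ : ℤ) : ℝ) *
        ∑ i, (∏ j ∈ Finset.univ.erase i, A (σ j) j) * H (σ i) i
      = ∑ i, ∑ k, A.adjugate i k * H k i := by
  classical
  have h1 : ∀ i : Fin p, ∑ k, A.adjugate i k * H k i
      = ∑ σ : Equiv.Perm (Fin p), ((Equiv.Perm.sign σ : ℤ) : ℝ) *
          ((∏ j ∈ Finset.univ.erase i, A (σ j) j) * H (σ i) i) := by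
    intro i
    have h2 : ∑ k, A.adjugate i k * H k i = (A.adjugate.mulVec (fun k => H k i)) i := by
      simp [Matrix.mulVec, dotProduct]
    rw [h2, ← Matrix.cramer_eq_adjugate_mulVec, Matrix.cramer_apply, Matrix.det_apply']
    refine Finset.sum_congr rfl fun σ _ => ?_
    congr 1
    rw [← Finset.mul_prod_erase Finset.univ _ (Finset.mem_univ i)]
    rw [Matrix.updateCol_self, mul_comm]
    congr 1
    refine Finset.prod_congr rfl fun j hj => ?_
    rw [Matrix.updateCol_ne (Finset.ne_of_mem_erase hj)]
  rw [Finset.sum_congr rfl fun i _ => h1 i, Finset.sum_comm]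
  exact Finset.sum_congr rfl fun σ _ => by rw [Finset.mul_sum]

private lemma swap3_aux {p : ℕ} (F : Fin p → Fin p → Fin p → ℝ) :
    ∑ i, ∑ r, ∑ s, F i r s = ∑ s, ∑ i, ∑ r, F i r s := by
  have h1 : ∀ i, ∑ r, ∑ s, F i r s = ∑ s, ∑ r, F i r s := fun i => Finset.sum_comm
  simp only [h1]
  exact Finset.sum_comm

theorem stmt_9 (p : ℕ) (Ω : Set (Fin p → ℝ)) (hΩ : IsOpen Ω)
    (e : Fin p → ℝ) (he : e ∈ Ω)
    (φ : (Fin p → ℝ) → (Fin p → ℝ) → (Fin p → ℝ))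
    (hφC2 : ContDiffOn ℝ 2
      (fun z : (Fin p → ℝ) × (Fin p → ℝ) => φ z.1 z.2) (Ω ×ˢ Ω))
    (hφe : ∀ θ ∈ Ω, φ θ e = θ)
    (hφmaps : ∀ θ ∈ Ω, ∀ a ∈ Ω, φ θ a ∈ Ω)
    (Φ : (Fin p → ℝ) → Matrix (Fin p) (Fin p) ℝ)
    (hΦ : ∀ θ ∈ Ω, ∀ r s : Fin p,
      Φ θ r s = fderiv ℝ (fun a => φ θ a r) e (Pi.single s 1))
    (hΦinv : ∀ θ ∈ Ω, IsUnit (Φ θ).det)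
    (πH : (Fin p → ℝ) → ℝ)
    (hπH : ∀ θ ∈ Ω, πH θ = |(Φ θ).det|⁻¹)
    (u : Fin p → (Fin p → ℝ) → ℝ → ℝ)
    (hu_C1 : ∀ s : Fin p, ∀ α ∈ Set.Ioo (0:ℝ) 1, ∀ θ ∈ Ω,
      DifferentiableAt ℝ (fun θ' => u s θ' α) θ)
    (hequiv : ∀ θ ∈ Ω, ∀ a ∈ Ω, ∀ α ∈ Set.Ioo (0:ℝ) 1, ∀ i : Fin p,
      u i (φ θ a) α
        = ∑ s, u s θ α * fderiv ℝ (fun θ' => φ θ' a i) θ (Pi.single s 1)) :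
    ∀ θ ∈ Ω, ∀ α ∈ Set.Ioo (0:ℝ) 1,
      ∑ s, fderiv ℝ (fun θ' => u s θ' α * πH θ') θ (Pi.single s 1) = 0 := by
  classical
  intro θ₀ hθ₀ α hα
  have hopen : IsOpen (Ω ×ˢ Ω) := hΩ.prod hΩ
  set f : ((Fin p → ℝ) × (Fin p → ℝ)) → (Fin p → ℝ) := fun z => φ z.1 z.2 with hfdef
  have hfC2 : ∀ {θ a : Fin p → ℝ}, θ ∈ Ω → a ∈ Ω → ContDiffAt ℝ 2 f (θ, a) :=
    fun h1 h2 => hφC2.contDiffAt (hopen.mem_nhds ⟨h1, h2⟩)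
  have hfd : ∀ {θ a : Fin p → ℝ}, θ ∈ Ω → a ∈ Ω → DifferentiableAt ℝ f (θ, a) :=
    fun h1 h2 => (hfC2 h1 h2).differentiableAt two_ne_zero
  -- partial derivative in the second variable
  have hA : ∀ {θ a : Fin p → ℝ}, θ ∈ Ω → a ∈ Ω →
      HasFDerivAt (fun b => φ θ b)
        ((fderiv ℝ f (θ, a)).comp (ContinuousLinearMap.inr ℝ _ _)) a :=
    fun {θ a} h1 h2 => ((hfd h1 h2).hasFDerivAt.comp a (hasFDerivAt_prodMk_right θ a))
  -- partial derivative in the first variable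
  have hT : ∀ {θ a : Fin p → ℝ}, θ ∈ Ω → a ∈ Ω →
      HasFDerivAt (fun θ' => φ θ' a)
        ((fderiv ℝ f (θ, a)).comp (ContinuousLinearMap.inl ℝ _ _)) θ :=
    fun {θ a} h1 h2 => by
      have := ((hfd h1 h2).hasFDerivAt.comp θ (hasFDerivAt_prodMk_left (𝕜 := ℝ) θ a)); exact this
  have hAi : ∀ {θ a : Fin p → ℝ}, θ ∈ Ω → a ∈ Ω → ∀ (i : Fin p) (w : Fin p → ℝ),
      fderiv ℝ (fun b => φ θ b i) a w = fderiv ℝ f (θ, a) (0, w) i := by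
    intro θ a h1 h2 i w
    have h0 := (ContinuousLinearMap.proj (R := ℝ) (φ := fun _ : Fin p => ℝ)
      i).hasFDerivAt.comp a (hA h1 h2)
    have h : HasFDerivAt (fun b => φ θ b i)
        ((ContinuousLinearMap.proj (R := ℝ) (φ := fun _ : Fin p => ℝ) i).comp
          ((fderiv ℝ f (θ, a)).comp (ContinuousLinearMap.inr ℝ _ _))) a := h0
    rw [h.fderiv]
    simp
  have hTi : ∀ {θ a : Fin p → ℝ}, θ ∈ Ω → a ∈ Ω → ∀ (i : Fin p) (v : Fin p → ℝ),
      fderiv ℝ (fun θ' => φ θ' a i) θ v = fderiv ℝ f (θ, a) (v, 0) i := by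
    intro θ a h1 h2 i v
    have h0 := (ContinuousLinearMap.proj (R := ℝ) (φ := fun _ : Fin p => ℝ)
      i).hasFDerivAt.comp θ (hT h1 h2)
    have h : HasFDerivAt (fun θ' => φ θ' a i)
        ((ContinuousLinearMap.proj (R := ℝ) (φ := fun _ : Fin p => ℝ) i).comp
          ((fderiv ℝ f (θ, a)).comp (ContinuousLinearMap.inl ℝ _ _))) θ := h0
    rw [h.fderiv]
    simp
  -- the matrix M
  set M : (Fin p → ℝ) → Matrix (Fin p) (Fin p) ℝ :=
    fun θ => Matrix.of fun i r => fderiv ℝ f (θ, e) (0, Pi.single r 1) i with hMdef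
  have hΦM : ∀ θ ∈ Ω, Φ θ = M θ := by
    intro θ hθ
    ext i r
    rw [hΦ θ hθ i r, hAi hθ he i (Pi.single r 1)]
    rfl
  -- second derivative data
  set g := fderiv ℝ f with hgdef
  have hgd : DifferentiableAt ℝ g (θ₀, e) :=
    ((hfC2 hθ₀ he).fderiv_right (m := 1) (by norm_num)).differentiableAt one_ne_zero
  set g' := fderiv ℝ g (θ₀, e) with hg'def
  have hsym : ∀ v w, g' v w = g' w v := (hfC2 hθ₀ he).isSymmSndFDerivAt (by simp)
  have hDe : HasFDerivAt (fun θ => g (θ, e)) (g'.comp (ContinuousLinearMap.inl ℝ _ _)) θ₀ :=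
    hgd.hasFDerivAt.comp θ₀ (hasFDerivAt_prodMk_left θ₀ e)
  -- entrywise derivatives of M
  set B : Fin p → Fin p → ((Fin p → ℝ) →L[ℝ] ℝ) := fun i r =>
    (ContinuousLinearMap.proj (R := ℝ) (φ := fun _ : Fin p => ℝ) i).comp
      ((ContinuousLinearMap.apply ℝ (Fin p → ℝ)
          ((0, Pi.single r 1) : (Fin p → ℝ) × (Fin p → ℝ))).comp
        (g'.comp (ContinuousLinearMap.inl ℝ _ _))) with hBdef
  have hB : ∀ i r, HasFDerivAt (fun θ => M θ i r) (B i r) θ₀ := by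
    intro i r
    exact (ContinuousLinearMap.proj i).hasFDerivAt.comp θ₀
      (((ContinuousLinearMap.apply ℝ (Fin p → ℝ)
          ((0, Pi.single r 1) : (Fin p → ℝ) × (Fin p → ℝ))).hasFDerivAt).comp θ₀ hDe)
  -- the "second derivative" matrix entries
  set Hm : Fin p → Matrix (Fin p) (Fin p) ℝ := fun s =>
    Matrix.of fun i r => g' (Pi.single s 1, 0) (0, Pi.single r 1) i with hHmdef
  have hBval : ∀ s i r, B i r (Pi.single s 1) = Hm s i r := by
    intro s i r
    simp only [hBdef, ContinuousLinearMap.comp_apply, ContinuousLinearMap.inl_apply,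
      ContinuousLinearMap.apply_apply, ContinuousLinearMap.proj_apply]
    rfl
  have hc : ∀ s, DifferentiableAt ℝ (fun θ' => u s θ' α) θ₀ :=
    fun s => hu_C1 s α hα θ₀ hθ₀
  -- key identity from differentiating equivariance
  have key : ∀ i r : Fin p,
      ∑ j, M θ₀ j r * fderiv ℝ (fun θ' => u i θ' α) θ₀ (Pi.single j 1)
        = ∑ s, u s θ₀ α * Hm s i r := by
    intro i r
    have hinner : HasFDerivAt (fun a => φ θ₀ a)
        ((g (θ₀, e)).comp (ContinuousLinearMap.inr ℝ _ _)) e := hA hθ₀ he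
    have houter : HasFDerivAt (fun θ' => u i θ' α)
        (fderiv ℝ (fun θ' => u i θ' α) θ₀) (φ θ₀ e) := by
      rw [hφe θ₀ hθ₀]; exact (hc i).hasFDerivAt
    have hL : HasFDerivAt (fun a => u i (φ θ₀ a) α)
        ((fderiv ℝ (fun θ' => u i θ' α) θ₀).comp
          ((g (θ₀, e)).comp (ContinuousLinearMap.inr ℝ _ _))) e := houter.comp e hinner
    have hRterm : ∀ s : Fin p, HasFDerivAt (fun a => g (θ₀, a) (Pi.single s 1, 0) i)
        ((ContinuousLinearMap.proj (R := ℝ) (φ := fun _ : Fin p => ℝ) i).comp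
          ((ContinuousLinearMap.apply ℝ (Fin p → ℝ)
              ((Pi.single s 1, 0) : (Fin p → ℝ) × (Fin p → ℝ))).comp
            (g'.comp (ContinuousLinearMap.inr ℝ _ _)))) e := by
      intro s
      exact (ContinuousLinearMap.proj i).hasFDerivAt.comp e
        ((ContinuousLinearMap.apply ℝ (Fin p → ℝ)
            ((Pi.single s 1, 0) : (Fin p → ℝ) × (Fin p → ℝ))).hasFDerivAt.comp e
          (hgd.hasFDerivAt.comp e (hasFDerivAt_prodMk_right θ₀ e)))
    have hR : HasFDerivAt (fun a => ∑ s, u s θ₀ α * (g (θ₀, a) (Pi.single s 1, 0) i))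
        (∑ s, u s θ₀ α •
          ((ContinuousLinearMap.proj (R := ℝ) (φ := fun _ : Fin p => ℝ) i).comp
            ((ContinuousLinearMap.apply ℝ (Fin p → ℝ)
                ((Pi.single s 1, 0) : (Fin p → ℝ) × (Fin p → ℝ))).comp
              (g'.comp (ContinuousLinearMap.inr ℝ _ _))))) e :=
      HasFDerivAt.fun_sum (fun s _ => (hRterm s).const_mul _)
    have heq : (fun a => u i (φ θ₀ a) α) =ᶠ[nhds e]
        (fun a => ∑ s, u s θ₀ α * (g (θ₀, a) (Pi.single s 1, 0) i)) := by
      filter_upwards [hΩ.mem_nhds he] with a ha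
      rw [hequiv θ₀ hθ₀ a ha α hα i]
      exact Finset.sum_congr rfl fun s _ => by rw [hTi hθ₀ ha i (Pi.single s 1)]
    have hfd_eq := heq.fderiv_eq (𝕜 := ℝ)
    rw [hL.fderiv, hR.fderiv] at hfd_eq
    have hval := congrArg (fun T : (Fin p → ℝ) →L[ℝ] ℝ => T (Pi.single r 1)) hfd_eq
    simp only [ContinuousLinearMap.comp_apply, ContinuousLinearMap.inr_apply,
      ContinuousLinearMap.sum_apply, ContinuousLinearMap.smul_apply,
      ContinuousLinearMap.apply_apply, ContinuousLinearMap.proj_apply, smul_eq_mul] at hval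
    have hvec : (g (θ₀, e)) (0, Pi.single r 1) = ∑ j, M θ₀ j r • (Pi.single j 1 : Fin p → ℝ) := by
      funext k
      show M θ₀ k r = _
      rw [Finset.sum_apply]
      simp [Pi.single_apply]
    rw [hvec, map_sum] at hval
    simp only [_root_.map_smul, smul_eq_mul] at hval
    rw [hval]
    refine Finset.sum_congr rfl fun s _ => ?_
    congr 1
    exact congrFun (hsym (0, Pi.single r 1) (Pi.single s 1, 0)) i
  -- Jacobi's formula
  set d : (Fin p → ℝ) → ℝ := fun θ => (M θ).det with hddef
  have hd0 : d θ₀ ≠ 0 := by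
    have h := (hΦinv θ₀ hθ₀).ne_zero
    rwa [hΦM θ₀ hθ₀] at h
  have hdhas : HasFDerivAt d
      (∑ σ : Equiv.Perm (Fin p), ((Equiv.Perm.sign σ : ℤ) : ℝ) •
        ∑ i, (∏ j ∈ Finset.univ.erase i, M θ₀ (σ j) j) • B (σ i) i) θ₀ := by
    have hrw : d = fun θ => ∑ σ : Equiv.Perm (Fin p),
        ((Equiv.Perm.sign σ : ℤ) : ℝ) * ∏ i, M θ (σ i) i := by
      funext θ; exact Matrix.det_apply' (M θ)
    rw [hrw]
    apply HasFDerivAt.fun_sum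
    intro σ _
    exact (HasFDerivAt.finset_prod (fun i _ => hB (σ i) i)).const_mul _
  have hdd : DifferentiableAt ℝ d θ₀ := hdhas.differentiableAt
  have hdval : ∀ s, fderiv ℝ d θ₀ (Pi.single s 1)
      = ∑ i, ∑ k, (M θ₀).adjugate i k * Hm s k i := by
    intro s
    rw [hdhas.fderiv]
    rw [← det_deriv_aux (M θ₀) (Hm s)]
    simp [ContinuousLinearMap.sum_apply, ContinuousLinearMap.smul_apply, smul_eq_mul,
      Finset.mul_sum, hBval]
  have hdval' : ∀ s, fderiv ℝ d θ₀ (Pi.single s 1)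
      = ∑ i, ∑ r, (M θ₀).adjugate r i * Hm s i r := by
    intro s
    rw [hdval s]
    exact Finset.sum_comm
  -- contraction with the adjugate
  have hMadj : ∀ j i : Fin p, ∑ r, M θ₀ j r * (M θ₀).adjugate r i
      = d θ₀ * (if j = i then 1 else 0) := by
    intro j i
    have h := congrFun (congrFun (Matrix.mul_adjugate (M θ₀)) j) i
    simpa [Matrix.mul_apply, Matrix.one_apply, Matrix.smul_apply, smul_eq_mul] using h
  have hcontr : d θ₀ * ∑ j, fderiv ℝ (fun θ' => u j θ' α) θ₀ (Pi.single j 1)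
      = ∑ s, u s θ₀ α * fderiv ℝ d θ₀ (Pi.single s 1) := by
    have hL2 : ∀ i, ∑ r, (M θ₀).adjugate r i *
        (∑ j, M θ₀ j r * fderiv ℝ (fun θ' => u i θ' α) θ₀ (Pi.single j 1))
        = d θ₀ * fderiv ℝ (fun θ' => u i θ' α) θ₀ (Pi.single i 1) := by
      intro i
      calc ∑ r, (M θ₀).adjugate r i *
            (∑ j, M θ₀ j r * fderiv ℝ (fun θ' => u i θ' α) θ₀ (Pi.single j 1))
          = ∑ r, ∑ j, (M θ₀).adjugate r i *
              (M θ₀ j r * fderiv ℝ (fun θ' => u i θ' α) θ₀ (Pi.single j 1)) := by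
            exact Finset.sum_congr rfl fun r _ => Finset.mul_sum _ _ _
        _ = ∑ j, ∑ r, (M θ₀).adjugate r i *
              (M θ₀ j r * fderiv ℝ (fun θ' => u i θ' α) θ₀ (Pi.single j 1)) :=
            Finset.sum_comm
        _ = ∑ j, (∑ r, M θ₀ j r * (M θ₀).adjugate r i) *
              fderiv ℝ (fun θ' => u i θ' α) θ₀ (Pi.single j 1) := by
            refine Finset.sum_congr rfl fun j _ => ?_
            rw [Finset.sum_mul]
            exact Finset.sum_congr rfl fun r _ => by ring
        _ = ∑ j, d θ₀ * (if j = i then 1 else 0) *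
              fderiv ℝ (fun θ' => u i θ' α) θ₀ (Pi.single j 1) := by
            exact Finset.sum_congr rfl fun j _ => by rw [hMadj j i]
        _ = d θ₀ * fderiv ℝ (fun θ' => u i θ' α) θ₀ (Pi.single i 1) := by
            simp [Finset.sum_ite_eq, mul_ite, ite_mul]
    calc d θ₀ * ∑ j, fderiv ℝ (fun θ' => u j θ' α) θ₀ (Pi.single j 1)
        = ∑ i, d θ₀ * fderiv ℝ (fun θ' => u i θ' α) θ₀ (Pi.single i 1) :=
          Finset.mul_sum _ _ _
      _ = ∑ i, ∑ r, (M θ₀).adjugate r i * (∑ s, u s θ₀ α * Hm s i r) := by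
          refine Finset.sum_congr rfl fun i _ => ?_
          rw [← hL2 i]
          exact Finset.sum_congr rfl fun r _ => by rw [key i r]
      _ = ∑ i, ∑ r, ∑ s, u s θ₀ α * ((M θ₀).adjugate r i * Hm s i r) := by
          refine Finset.sum_congr rfl fun i _ => Finset.sum_congr rfl fun r _ => ?_
          rw [Finset.mul_sum]
          exact Finset.sum_congr rfl fun s _ => by ring
      _ = ∑ s, ∑ i, ∑ r, u s θ₀ α * ((M θ₀).adjugate r i * Hm s i r) := swap3_aux _
      _ = ∑ s, u s θ₀ α * fderiv ℝ d θ₀ (Pi.single s 1) := by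
          refine Finset.sum_congr rfl fun s _ => ?_
          rw [hdval' s, Finset.mul_sum]
          refine Finset.sum_congr rfl fun i _ => ?_
          rw [Finset.mul_sum]
  -- the prior near θ₀
  set ε : ℝ := if 0 < d θ₀ then 1 else -1 with hεdef
  have hev : πH =ᶠ[nhds θ₀] fun θ => ε * (d θ)⁻¹ := by
    have hcont : ContinuousAt d θ₀ := hdd.continuousAt
    rcases lt_or_gt_of_ne hd0 with hneg | hpos
    · have h1 : ∀ᶠ θ in nhds θ₀, d θ < 0 := hcont (Iio_mem_nhds hneg)
      filter_upwards [h1, hΩ.mem_nhds hθ₀] with θ h2 h3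
      rw [hπH θ h3, hΦM θ h3]
      show |d θ|⁻¹ = ε * (d θ)⁻¹
      rw [abs_of_neg h2, inv_neg, hεdef, if_neg (not_lt.2 hneg.le)]
      ring
    · have h1 : ∀ᶠ θ in nhds θ₀, 0 < d θ := hcont (Ioi_mem_nhds hpos)
      filter_upwards [h1, hΩ.mem_nhds hθ₀] with θ h2 h3
      rw [hπH θ h3, hΦM θ h3]
      show |d θ|⁻¹ = ε * (d θ)⁻¹
      rw [abs_of_pos h2, hεdef, if_pos hpos, one_mul]
  have hπdiff : DifferentiableAt ℝ πH θ₀ :=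
    (Filter.EventuallyEq.differentiableAt_iff hev).2 ((hdd.inv hd0).const_mul ε)
  have hπval : ∀ v, fderiv ℝ πH θ₀ v = ε * (-((d θ₀) ^ 2)⁻¹ * fderiv ℝ d θ₀ v) := by
    intro v
    rw [hev.fderiv_eq]
    have h := ((hasFDerivAt_inv hd0).comp θ₀ hdd.hasFDerivAt).const_mul ε
    have h2 : HasFDerivAt (fun θ => ε * (d θ)⁻¹)
        (ε • (ContinuousLinearMap.smulRight (1 : ℝ →L[ℝ] ℝ)
          (-(d θ₀ ^ 2)⁻¹)).comp (fderiv ℝ d θ₀)) θ₀ := h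
    rw [h2.fderiv]
    simp only [ContinuousLinearMap.smul_apply, ContinuousLinearMap.comp_apply,
      ContinuousLinearMap.smulRight_apply, ContinuousLinearMap.one_apply, smul_eq_mul]
    ring
  have hπ0 : πH θ₀ = ε * (d θ₀)⁻¹ := by
    rw [hπH θ₀ hθ₀, hΦM θ₀ hθ₀]
    show |d θ₀|⁻¹ = ε * (d θ₀)⁻¹
    rcases lt_or_gt_of_ne hd0 with hneg | hpos
    · rw [abs_of_neg hneg, inv_neg, hεdef, if_neg (not_lt.2 hneg.le)]; ring
    · rw [abs_of_pos hpos, hεdef, if_pos hpos, one_mul]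
  -- final assembly
  have hterm : ∀ s, fderiv ℝ (fun θ' => u s θ' α * πH θ') θ₀ (Pi.single s 1)
      = u s θ₀ α * fderiv ℝ πH θ₀ (Pi.single s 1)
        + πH θ₀ * fderiv ℝ (fun θ' => u s θ' α) θ₀ (Pi.single s 1) := by
    intro s
    have h := (hc s).hasFDerivAt.mul hπdiff.hasFDerivAt
    have h2 : HasFDerivAt (fun θ' => u s θ' α * πH θ')
        (u s θ₀ α • fderiv ℝ πH θ₀ + πH θ₀ • fderiv ℝ (fun θ' => u s θ' α) θ₀) θ₀ := h
    rw [h2.fderiv]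
    simp [smul_eq_mul]
  rw [Finset.sum_congr rfl fun s _ => hterm s, Finset.sum_add_distrib]
  have hsum1 : ∑ s, u s θ₀ α * fderiv ℝ πH θ₀ (Pi.single s 1)
      = ε * -((d θ₀) ^ 2)⁻¹ *
        (d θ₀ * ∑ j, fderiv ℝ (fun θ' => u j θ' α) θ₀ (Pi.single j 1)) := by
    rw [hcontr, Finset.mul_sum]
    refine Finset.sum_congr rfl fun s _ => ?_
    rw [hπval]
    ring
  have hsum2 : ∑ s, πH θ₀ * fderiv ℝ (fun θ' => u s θ' α) θ₀ (Pi.single s 1)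
      = ε * (d θ₀)⁻¹ * ∑ s, fderiv ℝ (fun θ' => u s θ' α) θ₀ (Pi.single s 1) := by
    rw [hπ0, Finset.mul_sum]
  rw [hsum1, hsum2]
  field_simp
  ring
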